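/- Batch-Constrained Soft Policy Improvement (Lemma 2): let π be a policy and let π' be a policy that maximizes the improvement objective of π at every state, i.e., for every state s and every policy π̃, J_π(π', s) ≥ J_π(π̃, s). Then q^d_{π'}(s,a) ≥ q^d_π(s,a) for all state-action pairs (s,a). -/

import Mathlib

open Finset Filter Topology

def IsPolicy {S A : Type*} [Fintype A] (pi : S → A → ℝ) : Prop :=
  (∀ s a, 0 ≤ pi s a) ∧ (∀ s, ∑ a, pi s a = 1)

def IsKernel {S A : Type*} [Fintype S] (p : S → A → S → ℝ) : Prop :=
  (∀ s a s', 0 ≤ p s a s') ∧ (∀ s a, ∑ s', p s a s' = 1)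

noncomputable def klPen {S A : Type*} [Fintype A]
    (πb π : S → A → ℝ) (s : S) : ℝ :=
  ∑ a, π s a * Real.log (π s a / πb s a)

noncomputable def bellman {S A : Type*} [Fintype S] [Fintype A]
    (p : S → A → S → ℝ) (r : S → A → ℝ) (γ τ : ℝ) (πb π : S → A → ℝ)
    (q : S × A → ℝ) : S × A → ℝ :=
  fun sa => r sa.1 sa.2 + γ * ∑ s', p sa.1 sa.2 s' *
    ((∑ a', π s' a' * q (s', a')) - τ * klPen πb π s')

noncomputable def supNorm {X : Type*} [Fintype X] [Nonempty X] (f : X → ℝ) : ℝ :=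
  Finset.univ.sup' Finset.univ_nonempty (fun x => |f x|)

noncomputable def Jobj {S A : Type*} [Fintype A]
    (τ : ℝ) (πb : S → A → ℝ) (qd : S × A → ℝ) (πt : S → A → ℝ) (s : S) : ℝ :=
  (∑ a, πt s a * qd (s, a)) - τ * klPen πb πt s

theorem stmt8 {S A : Type*} [Fintype S] [Fintype A] [Nonempty S] [Nonempty A]
    (p : S → A → S → ℝ) (hp : IsKernel p)
    (r : S → A → ℝ) (γ τ : ℝ) (hγ0 : 0 ≤ γ) (hγ1 : γ < 1) (hτ : 0 ≤ τ)
    (πb : S → A → ℝ) (hπb : IsPolicy πb) (hπbpos : ∀ s a, 0 < πb s a)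
    (π : S → A → ℝ) (hπ : IsPolicy π)
    (π' : S → A → ℝ) (hπ' : IsPolicy π')
    (qd : S × A → ℝ) (hqd : bellman p r γ τ πb π qd = qd)
    (qd' : S × A → ℝ) (hqd' : bellman p r γ τ πb π' qd' = qd')
    (hmax : ∀ s : S, ∀ πt : S → A → ℝ, IsPolicy πt →
      Jobj τ πb qd πt s ≤ Jobj τ πb qd π' s) :
    ∀ sa : S × A, qd sa ≤ qd' sa := by
  have hne : (Finset.univ : Finset (S × A)).Nonempty := Finset.univ_nonempty
  set f : S × A → ℝ := fun sa => qd sa - qd' sa with hf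
  set M : ℝ := Finset.univ.sup' hne f with hM
  have hfM : ∀ sa, f sa ≤ M := fun sa => Finset.le_sup' f (Finset.mem_univ sa)
  have key : ∀ sa : S × A, f sa ≤ γ * M := by
    intro sa
    have h1 : qd sa ≤ bellman p r γ τ πb π' qd sa := by
      conv_lhs => rw [← hqd]
      unfold bellman
      apply add_le_add le_rfl
      apply mul_le_mul_of_nonneg_left _ hγ0
      apply Finset.sum_le_sum
      intro s' _
      apply mul_le_mul_of_nonneg_left _ (hp.1 _ _ _)
      exact hmax s' π hπ
    have hdiff : bellman p r γ τ πb π' qd sa - bellman p r γ τ πb π' qd' sa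
        = γ * ∑ s', p sa.1 sa.2 s' * ∑ a', π' s' a' * (qd (s', a') - qd' (s', a')) := by
      simp only [bellman]
      rw [add_sub_add_left_eq_sub, ← mul_sub, ← Finset.sum_sub_distrib]
      congr 1
      apply Finset.sum_congr rfl
      intro s' _
      rw [← mul_sub]
      congr 1
      rw [sub_sub_sub_cancel_right, ← Finset.sum_sub_distrib]
      apply Finset.sum_congr rfl
      intro a' _
      ring
    have hb1 : ∀ s', ∑ a', π' s' a' * (qd (s', a') - qd' (s', a')) ≤ M := by
      intro s'
      calc ∑ a', π' s' a' * (qd (s', a') - qd' (s', a'))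
          ≤ ∑ a', π' s' a' * M :=
            Finset.sum_le_sum (fun a' _ => mul_le_mul_of_nonneg_left (hfM (s', a')) (hπ'.1 _ _))
        _ = M := by rw [← Finset.sum_mul, hπ'.2, one_mul]
    have hb2 : ∑ s', p sa.1 sa.2 s' * ∑ a', π' s' a' * (qd (s', a') - qd' (s', a')) ≤ M := by
      calc ∑ s', p sa.1 sa.2 s' * ∑ a', π' s' a' * (qd (s', a') - qd' (s', a'))
          ≤ ∑ s', p sa.1 sa.2 s' * M :=
            Finset.sum_le_sum (fun s' _ => mul_le_mul_of_nonneg_left (hb1 s') (hp.1 _ _ _))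
        _ = M := by rw [← Finset.sum_mul, hp.2, one_mul]
    have h2 : bellman p r γ τ πb π' qd sa - qd' sa ≤ γ * M := by
      conv_lhs => rw [← hqd']
      rw [hdiff]
      exact mul_le_mul_of_nonneg_left hb2 hγ0
    have : f sa = qd sa - qd' sa := rfl
    rw [this]
    linarith
  have hMle : M ≤ γ * M := Finset.sup'_le hne f (fun sa _ => key sa)
  have hM0 : M ≤ 0 := by nlinarith
  intro sa
  have := hfM sa
  simp only [hf] at this
  linarith
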